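/- Let e, d ∈ {−1, 1} and a, b, κ, λ ∈ ℝ with b² ≠ e·a², and let A, B : ℝ → ℝ be C¹ with A > 0 and B > 0. Let R, H : ℝ → ℝ be C² with R'(t) ≠ 0 for all t, and suppose that for all t ∈ ℝ the two identities (a² + e·b²)·K(t) = 4eκ + d·B(R(t))·(b² + e·a² + 2(1−e)·a·b·H'(t)) and a·b·K(t) = −2λ + d·B(R(t))·((b²−a²)·H'(t) − a·b) hold, where K(t) = A(R(t))·R'(t)² − d·B(R(t))·H'(t)². Then the map u(x,y) = (R(ay−bx), ax+by+H(ay−bx)) is harmonic on ℝ² with parameters e, d and target data A, B. -/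

import Mathlib

open Real

/-- First partial derivative in the `x` direction. -/
noncomputable def px (f : ℝ × ℝ → ℝ) (p : ℝ × ℝ) : ℝ := fderiv ℝ f p (1, 0)

/-- First partial derivative in the `y` direction. -/
noncomputable def py (f : ℝ × ℝ → ℝ) (p : ℝ × ℝ) : ℝ := fderiv ℝ f p (0, 1)

/-- Harmonicity of the map `u = (R, S)` for domain conformal metric
`e^f (dx² − e dy²)` and target metric `A(R) dR² − d B(R) dS²`:
the Euler–Lagrange system (EL1)–(EL2). -/
noncomputable def IsHarmonic (e d : ℝ) (A B : ℝ → ℝ) (R S : ℝ × ℝ → ℝ) : Prop :=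
  ∀ p : ℝ × ℝ,
    2 * A (R p) * (e * px (px R) p - py (py R) p)
        + deriv A (R p) * (e * (px R p) ^ 2 - (py R p) ^ 2)
        + d * deriv B (R p) * (e * (px S p) ^ 2 - (py S p) ^ 2) = 0
    ∧ B (R p) * (e * px (px S) p - py (py S) p)
        + deriv B (R p) * (e * px R p * px S p - py R p * py S p) = 0

lemma master (a b c₁ c₂ : ℝ) (g : ℝ → ℝ) (hg : Differentiable ℝ g) :
    (px (fun q : ℝ × ℝ => c₁ * q.1 + c₂ * q.2 + g (a * q.2 - b * q.1))
      = fun p : ℝ × ℝ => c₁ - b * deriv g (a * p.2 - b * p.1))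
    ∧ (py (fun q : ℝ × ℝ => c₁ * q.1 + c₂ * q.2 + g (a * q.2 - b * q.1))
      = fun p : ℝ × ℝ => c₂ + a * deriv g (a * p.2 - b * p.1)) := by
  have key : ∀ p : ℝ × ℝ, HasFDerivAt (fun q : ℝ × ℝ => c₁ * q.1 + c₂ * q.2 + g (a * q.2 - b * q.1))
      (c₁ • ContinuousLinearMap.fst ℝ ℝ ℝ + c₂ • ContinuousLinearMap.snd ℝ ℝ ℝ
        + deriv g (a * p.2 - b * p.1) • (a • ContinuousLinearMap.snd ℝ ℝ ℝ - b • ContinuousLinearMap.fst ℝ ℝ ℝ)) p := by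
    intro p
    have hl : HasFDerivAt (fun q : ℝ × ℝ => a * q.2 - b * q.1)
        (a • ContinuousLinearMap.snd ℝ ℝ ℝ - b • ContinuousLinearMap.fst ℝ ℝ ℝ) p := by
      have := (a • ContinuousLinearMap.snd ℝ ℝ ℝ - b • ContinuousLinearMap.fst ℝ ℝ ℝ).hasFDerivAt (x := p)
      convert this using 2 with q
      simp
    have hcomp : HasFDerivAt (fun q : ℝ × ℝ => g (a * q.2 - b * q.1))
        (deriv g (a * p.2 - b * p.1) • (a • ContinuousLinearMap.snd ℝ ℝ ℝ - b • ContinuousLinearMap.fst ℝ ℝ ℝ)) p :=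
      ((hg (a * p.2 - b * p.1)).hasDerivAt).comp_hasFDerivAt p hl
    have hlin : HasFDerivAt (fun q : ℝ × ℝ => c₁ * q.1 + c₂ * q.2)
        (c₁ • ContinuousLinearMap.fst ℝ ℝ ℝ + c₂ • ContinuousLinearMap.snd ℝ ℝ ℝ) p := by
      have := (c₁ • ContinuousLinearMap.fst ℝ ℝ ℝ + c₂ • ContinuousLinearMap.snd ℝ ℝ ℝ).hasFDerivAt (x := p)
      convert this using 2 with q
      simp
    exact hlin.add hcomp
  constructor <;> funext p
  · show fderiv ℝ _ p (1, 0) = _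
    rw [(key p).fderiv]
    simp [smul_eq_mul]
    ring
  · show fderiv ℝ _ p (0, 1) = _
    rw [(key p).fderiv]
    simp [smul_eq_mul]
    ring

lemma deriv_of_deriv_diff {R : ℝ → ℝ} (hR : ContDiff ℝ 2 R) : Differentiable ℝ (deriv R) := by
  have h2 : ContDiff ℝ (1+1) R := by exact_mod_cast hR
  exact (contDiff_succ_iff_deriv.mp h2).2.2.differentiable one_ne_zero

lemma derivEq (d C c0 c1 c2 : ℝ) (A B R H : ℝ → ℝ)
    (hA : ContDiff ℝ 1 A) (hB : ContDiff ℝ 1 B)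
    (hR : ContDiff ℝ 2 R) (hH : ContDiff ℝ 2 H)
    (hK : ∀ t, C * (A (R t) * (deriv R t) ^ 2 - d * B (R t) * (deriv H t) ^ 2)
      = c0 + d * B (R t) * (c1 + c2 * deriv H t)) (t : ℝ) :
    C * (deriv A (R t) * deriv R t * (deriv R t) ^ 2
        + A (R t) * (2 * deriv R t * deriv (deriv R) t)
        - d * (deriv B (R t) * deriv R t * (deriv H t) ^ 2
            + B (R t) * (2 * deriv H t * deriv (deriv H) t)))
    = d * (deriv B (R t) * deriv R t * (c1 + c2 * deriv H t)
        + B (R t) * (c2 * deriv (deriv H) t)) := by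
  have hRd : Differentiable ℝ R := hR.differentiable two_ne_zero
  have hHd : Differentiable ℝ H := hH.differentiable two_ne_zero
  have hR2 := deriv_of_deriv_diff hR
  have hH2 := deriv_of_deriv_diff hH
  have hAd : Differentiable ℝ A := hA.differentiable one_ne_zero
  have hBd : Differentiable ℝ B := hB.differentiable one_ne_zero
  have hRt := (hRd t).hasDerivAt
  have hR't := (hR2 t).hasDerivAt
  have hH't := (hH2 t).hasDerivAt
  have hARt : HasDerivAt (fun s => A (R s)) (deriv A (R t) * deriv R t) t := by
    exact ((hAd (R t)).hasDerivAt).comp t hRt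
  have hBRt : HasDerivAt (fun s => B (R s)) (deriv B (R t) * deriv R t) t := by
    exact ((hBd (R t)).hasDerivAt).comp t hRt
  have hRsq : HasDerivAt (fun s => (deriv R s) ^ 2) (2 * deriv R t * deriv (deriv R) t) t := by
    have := hR't.pow 2
    norm_num at this
    exact this
  have hHsq : HasDerivAt (fun s => (deriv H s) ^ 2) (2 * deriv H t * deriv (deriv H) t) t := by
    have := hH't.pow 2
    norm_num at this
    exact this
  have hL : HasDerivAt (fun s => C * (A (R s) * (deriv R s) ^ 2 - d * B (R s) * (deriv H s) ^ 2))
      (C * ((deriv A (R t) * deriv R t) * (deriv R t) ^ 2 + A (R t) * (2 * deriv R t * deriv (deriv R) t)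
        - ((d * (deriv B (R t) * deriv R t)) * (deriv H t) ^ 2 + (d * B (R t)) * (2 * deriv H t * deriv (deriv H) t)))) t :=
    ((hARt.mul hRsq).sub ((hBRt.const_mul d).mul hHsq)).const_mul C
  have hRhs : HasDerivAt (fun s => c0 + d * B (R s) * (c1 + c2 * deriv H s))
      ((d * (deriv B (R t) * deriv R t)) * (c1 + c2 * deriv H t) + (d * B (R t)) * (c2 * deriv (deriv H) t)) t :=
    (((hBRt.const_mul d).mul ((hH't.const_mul c2).const_add c1)).const_add c0)
  have hfun : (fun s => C * (A (R s) * (deriv R s) ^ 2 - d * B (R s) * (deriv H s) ^ 2))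
      = (fun s => c0 + d * B (R s) * (c1 + c2 * deriv H s)) := funext hK
  have heq := (hfun ▸ hL).unique hRhs
  linear_combination heq

lemma key_alg (e d a b A₀ a₁ B₀ b₁ r1 r2 h1 h2 : ℝ)
    (he : e = -1 ∨ e = 1) (hd : d = -1 ∨ d = 1)
    (hab : b ^ 2 ≠ e * a ^ 2) (hr1 : r1 ≠ 0)
    (E1 : (a^2 + e*b^2) * (a₁*r1^3 + 2*A₀*r1*r2 - d*b₁*r1*h1^2 - 2*d*B₀*h1*h2)
        = d*b₁*r1*(b^2 + e*a^2 + 2*(1-e)*a*b*h1) + 2*(1-e)*a*b*d*B₀*h2)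
    (E2 : a*b * (a₁*r1^3 + 2*A₀*r1*r2 - d*b₁*r1*h1^2 - 2*d*B₀*h1*h2)
        = d*b₁*r1*((b^2 - a^2)*h1 - a*b) + (b^2 - a^2)*d*B₀*h2) :
    (2*A₀*(e*(b^2*r2) - a^2*r2) + a₁*(e*(-(b*r1))^2 - (a*r1)^2)
        + d*b₁*(e*(a - b*h1)^2 - (b + a*h1)^2) = 0)
    ∧ (B₀*(e*(b^2*h2) - a^2*h2) + b₁*(e*(-(b*r1))*(a - b*h1) - (a*r1)*(b + a*h1)) = 0) := by
  have hdne : d ≠ 0 := by rcases hd with h | h <;> subst h <;> norm_num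
  rcases he with he | he <;> subst he
  · -- e = -1
    have hapb : a^2 + b^2 ≠ 0 := fun h => hab (by nlinarith)
    have hEL2 : B₀*h2 + b₁*r1*h1 = 0 := by
      have h : (d*(a^2+b^2)^2) * (B₀*h2 + b₁*r1*h1) = 0 := by
        linear_combination (a^2-b^2)*E2 - a*b*E1
      have h0 : d*(a^2+b^2)^2 ≠ 0 := mul_ne_zero hdne (pow_ne_zero _ hapb)
      exact (mul_eq_zero.mp h).resolve_left h0
    have hA1 : (a^2-b^2) * ((a₁*r1^3 + 2*A₀*r1*r2 - d*b₁*r1*h1^2 - 2*d*B₀*h1*h2) + d*b₁*r1) = 0 := by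
      linear_combination E1 + 4*a*b*d*hEL2
    have hA2 : a*b * ((a₁*r1^3 + 2*A₀*r1*r2 - d*b₁*r1*h1^2 - 2*d*B₀*h1*h2) + d*b₁*r1) = 0 := by
      linear_combination E2 + d*(b^2-a^2)*hEL2
    have hK' : (a₁*r1^3 + 2*A₀*r1*r2 - d*b₁*r1*h1^2 - 2*d*B₀*h1*h2) + d*b₁*r1 = 0 := by
      have h : (a^2+b^2)^2 * ((a₁*r1^3 + 2*A₀*r1*r2 - d*b₁*r1*h1^2 - 2*d*B₀*h1*h2) + d*b₁*r1) = 0 := by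
        linear_combination (a^2-b^2)*hA1 + 4*a*b*hA2
      exact (mul_eq_zero.mp h).resolve_left (pow_ne_zero _ hapb)
    have hT : 2*A₀*r2 + a₁*r1^2 + d*b₁*h1^2 + d*b₁ = 0 := by
      have h : r1 * (2*A₀*r2 + a₁*r1^2 + d*b₁*h1^2 + d*b₁) = r1 * 0 := by
        linear_combination hK' + 2*d*h1*hEL2
      exact mul_left_cancel₀ hr1 h
    constructor
    · linear_combination (-(a^2+b^2))*hT
    · linear_combination (-(a^2+b^2))*hEL2
  · -- e = 1
    have hc : b^2 - a^2 ≠ 0 := sub_ne_zero_of_ne (by simpa using hab)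
    have hapb : a^2 + b^2 ≠ 0 := fun h => hc (by nlinarith)
    have hK' : (a₁*r1^3 + 2*A₀*r1*r2 - d*b₁*r1*h1^2 - 2*d*B₀*h1*h2) = d*b₁*r1 := by
      refine mul_left_cancel₀ hapb ?_
      linear_combination E1
    have hEL2 : (b^2-a^2)*(B₀*h2 + b₁*r1*h1) = 2*a*b*b₁*r1 := by
      have h : d * ((b^2-a^2)*(B₀*h2 + b₁*r1*h1) - 2*a*b*b₁*r1) = 0 := by
        linear_combination a*b*hK' - E2
      have := (mul_eq_zero.mp h).resolve_left hdne
      linarith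
    constructor
    · have h : r1 * ((2*A₀*r2 + a₁*r1^2 + d*b₁*h1^2 - d*b₁) * (b^2-a^2)) = r1 * (4*a*b*d*b₁*h1) := by
        linear_combination (b^2-a^2)*hK' + 2*d*h1*hEL2
      have h2 : (2*A₀*r2 + a₁*r1^2 + d*b₁*h1^2 - d*b₁) * (b^2-a^2) = 4*a*b*d*b₁*h1 :=
        mul_left_cancel₀ hr1 h
      linear_combination h2
    · linear_combination hEL2

theorem stmt_8 (e d a b κ lam : ℝ)
    (he : e = -1 ∨ e = 1) (hd : d = -1 ∨ d = 1)
    (hab : b ^ 2 ≠ e * a ^ 2)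
    (A B : ℝ → ℝ) (hA : ContDiff ℝ 1 A) (hB : ContDiff ℝ 1 B)
    (hApos : ∀ r, 0 < A r) (hBpos : ∀ r, 0 < B r)
    (R H : ℝ → ℝ) (hR : ContDiff ℝ 2 R) (hH : ContDiff ℝ 2 H)
    (hR' : ∀ t, deriv R t ≠ 0)
    (hK1 : ∀ t : ℝ,
      (a ^ 2 + e * b ^ 2) *
          (A (R t) * (deriv R t) ^ 2 - d * B (R t) * (deriv H t) ^ 2)
        = 4 * e * κ
          + d * B (R t) * (b ^ 2 + e * a ^ 2 + 2 * (1 - e) * a * b * deriv H t))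
    (hK2 : ∀ t : ℝ,
      a * b * (A (R t) * (deriv R t) ^ 2 - d * B (R t) * (deriv H t) ^ 2)
        = -2 * lam + d * B (R t) * ((b ^ 2 - a ^ 2) * deriv H t - a * b)) :
    IsHarmonic e d A B
      (fun p => R (a * p.2 - b * p.1))
      (fun p => a * p.1 + b * p.2 + H (a * p.2 - b * p.1)) := by
  intro p
  have hRd : Differentiable ℝ R := hR.differentiable two_ne_zero
  have hHd : Differentiable ℝ H := hH.differentiable two_ne_zero
  have hR2 := deriv_of_deriv_diff hR
  have hH2 := deriv_of_deriv_diff hH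
  -- first partials
  have hRx : px (fun q : ℝ × ℝ => R (a * q.2 - b * q.1))
      = fun q : ℝ × ℝ => -(b * deriv R (a * q.2 - b * q.1)) := by
    simpa using (master a b 0 0 R hRd).1
  have hRy : py (fun q : ℝ × ℝ => R (a * q.2 - b * q.1))
      = fun q : ℝ × ℝ => a * deriv R (a * q.2 - b * q.1) := by
    simpa using (master a b 0 0 R hRd).2
  have hSx : px (fun q : ℝ × ℝ => a * q.1 + b * q.2 + H (a * q.2 - b * q.1))
      = fun q : ℝ × ℝ => a - b * deriv H (a * q.2 - b * q.1) :=
    (master a b a b H hHd).1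
  have hSy : py (fun q : ℝ × ℝ => a * q.1 + b * q.2 + H (a * q.2 - b * q.1))
      = fun q : ℝ × ℝ => b + a * deriv H (a * q.2 - b * q.1) :=
    (master a b a b H hHd).2
  -- derivative of -(b * deriv R x) and friends
  have hdR : ∀ (c : ℝ) (F : ℝ → ℝ), Differentiable ℝ F →
      deriv (fun x => c * F x) = fun x => c * deriv F x := by
    intro c F hF
    funext x
    exact deriv_const_mul c (hF x)
  -- second partials
  have hRxx : px (px (fun q : ℝ × ℝ => R (a * q.2 - b * q.1))) p
      = b ^ 2 * deriv (deriv R) (a * p.2 - b * p.1) := by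
    rw [hRx]
    have h1 : (fun q : ℝ × ℝ => -(b * deriv R (a * q.2 - b * q.1)))
        = fun q : ℝ × ℝ => (fun x => (-b) * deriv R x) (a * q.2 - b * q.1) := by
      funext q; ring_nf
    rw [h1]
    have := congrFun (master a b 0 0 (fun x => (-b) * deriv R x) (hR2.const_mul (-b))).1 p
    simp only [zero_mul, zero_add, zero_sub] at this
    rw [this, hdR (-b) (deriv R) hR2]
    ring
  have hRyy : py (py (fun q : ℝ × ℝ => R (a * q.2 - b * q.1))) p
      = a ^ 2 * deriv (deriv R) (a * p.2 - b * p.1) := by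
    rw [hRy]
    have h1 : (fun q : ℝ × ℝ => a * deriv R (a * q.2 - b * q.1))
        = fun q : ℝ × ℝ => (fun x => a * deriv R x) (a * q.2 - b * q.1) := rfl
    rw [h1]
    have := congrFun (master a b 0 0 (fun x => a * deriv R x) (hR2.const_mul a)).2 p
    simp only [zero_mul, zero_add] at this
    rw [this, hdR a (deriv R) hR2]
    ring
  have hSxx : px (px (fun q : ℝ × ℝ => a * q.1 + b * q.2 + H (a * q.2 - b * q.1))) p
      = b ^ 2 * deriv (deriv H) (a * p.2 - b * p.1) := by
    rw [hSx]
    have h1 : (fun q : ℝ × ℝ => a - b * deriv H (a * q.2 - b * q.1))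
        = fun q : ℝ × ℝ => (fun x => a + (-b) * deriv H x) (a * q.2 - b * q.1) := by
      funext q; ring_nf
    rw [h1]
    have hg : Differentiable ℝ (fun x => a + (-b) * deriv H x) :=
      (hH2.const_mul (-b)).const_add a
    have := congrFun (master a b 0 0 (fun x => a + (-b) * deriv H x) hg).1 p
    simp only [zero_mul, zero_add, zero_sub] at this
    rw [this]
    have hda : deriv (fun x => a + (-b) * deriv H x) = fun x => (-b) * deriv (deriv H) x := by
      funext x
      rw [deriv_const_add]
      exact deriv_const_mul (-b) (hH2 x)
    rw [hda]
    ring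
  have hSyy : py (py (fun q : ℝ × ℝ => a * q.1 + b * q.2 + H (a * q.2 - b * q.1))) p
      = a ^ 2 * deriv (deriv H) (a * p.2 - b * p.1) := by
    rw [hSy]
    have h1 : (fun q : ℝ × ℝ => b + a * deriv H (a * q.2 - b * q.1))
        = fun q : ℝ × ℝ => (fun x => b + a * deriv H x) (a * q.2 - b * q.1) := rfl
    rw [h1]
    have hg : Differentiable ℝ (fun x => b + a * deriv H x) :=
      (hH2.const_mul a).const_add b
    have := congrFun (master a b 0 0 (fun x => b + a * deriv H x) hg).2 p
    simp only [zero_mul, zero_add] at this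
    rw [this]
    have hda : deriv (fun x => b + a * deriv H x) = fun x => a * deriv (deriv H) x := by
      funext x
      rw [deriv_const_add]
      exact deriv_const_mul a (hH2 x)
    rw [hda]
    ring
  -- conservation law derivatives
  set t := a * p.2 - b * p.1 with ht
  have E1 := derivEq d (a^2 + e*b^2) (4*e*κ) (b^2 + e*a^2) (2*(1-e)*a*b) A B R H hA hB hR hH
    (by intro s; exact_mod_cast hK1 s) t
  have hK2' : ∀ s, a*b * (A (R s) * (deriv R s) ^ 2 - d * B (R s) * (deriv H s) ^ 2)
      = -2*lam + d * B (R s) * (-(a*b) + (b^2 - a^2) * deriv H s) := by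
    intro s; linear_combination hK2 s
  have E2 := derivEq d (a*b) (-2*lam) (-(a*b)) (b^2 - a^2) A B R H hA hB hR hH hK2' t
  obtain ⟨G1, G2⟩ := key_alg e d a b (A (R t)) (deriv A (R t)) (B (R t)) (deriv B (R t))
    (deriv R t) (deriv (deriv R) t) (deriv H t) (deriv (deriv H) t)
    he hd hab (hR' t)
    (by linear_combination E1) (by linear_combination E2)
  constructor
  · show 2 * A ((fun p : ℝ × ℝ => R (a * p.2 - b * p.1)) p) * _ + _ + _ = 0
    simp only []
    rw [hRxx, hRyy]
    simp only [hRx, hRy, hSx, hSy]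
    linear_combination G1
  · simp only []
    rw [hSxx, hSyy]
    simp only [hRx, hRy, hSx, hSy]
    linear_combination G2
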